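/- Nathanson's symmetry: for all positive integers u, v, every n ≥ 0 and 1 ≤ i ≤ 2^n, c_z^{(u,v)}(n,i) · c_{z^{-1}}^{(v,u)}(n, 2^n+1−i) = 1. -/

import Mathlib

/-- The matrix `L_u`. -/
def Lmat (u : ℕ) : Matrix (Fin 2) (Fin 2) ℕ := !![1, 0; u, 1]

/-- The matrix `R_v`. -/
def Rmat (v : ℕ) : Matrix (Fin 2) (Fin 2) ℕ := !![1, v; 0, 1]

/-- The word in `L_u`, `R_v` corresponding to the 0-indexed position `j` in row `n`
(bits of `j`, least significant = last move, `0 ↦ L`, `1 ↦ R`). -/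
def cwWord (u v : ℕ) : ℕ → ℕ → Matrix (Fin 2) (Fin 2) ℕ
  | 0, _ => 1
  | n + 1, j => (if j % 2 = 0 then Lmat u else Rmat v) * cwWord u v n (j / 2)

/-- A matrix acting as a linear fractional transformation on `ℚ`. -/
def lft (M : Matrix (Fin 2) (Fin 2) ℕ) (z : ℚ) : ℚ :=
  ((M 0 0 : ℚ) * z + (M 0 1 : ℚ)) / ((M 1 0 : ℚ) * z + (M 1 1 : ℚ))

/-- `cw u v z n i` is the `i`-th vertex (1-indexed) of row `n` of the
(u,v)-Calkin-Wilf tree rooted at `z`. -/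
def cw (u v : ℕ) (z : ℚ) (n i : ℕ) : ℚ := lft (cwWord u v n (i - 1)) z

/-- Swap a 2×2 matrix across the antidiagonal. -/
def swapM (M : Matrix (Fin 2) (Fin 2) ℕ) : Matrix (Fin 2) (Fin 2) ℕ :=
  !![M 1 1, M 1 0; M 0 1, M 0 0]

lemma swapM_mul (A B : Matrix (Fin 2) (Fin 2) ℕ) :
    swapM (A * B) = swapM A * swapM B := by
  ext a b
  fin_cases a <;> fin_cases b <;>
    simp [swapM, Matrix.mul_apply, Fin.sum_univ_two] <;> ring

lemma swapM_one : swapM 1 = 1 := by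
  ext a b; fin_cases a <;> fin_cases b <;> simp [swapM]

lemma swapM_L (u : ℕ) : swapM (Lmat u) = Rmat u := by
  ext a b; fin_cases a <;> fin_cases b <;> simp [swapM, Lmat, Rmat]

lemma swapM_R (v : ℕ) : swapM (Rmat v) = Lmat v := by
  ext a b; fin_cases a <;> fin_cases b <;> simp [swapM, Lmat, Rmat]

lemma cwWord_flip (u v : ℕ) : ∀ n j, j < 2 ^ n →
    cwWord v u n (2 ^ n - 1 - j) = swapM (cwWord u v n j) := by
  intro n
  induction n with
  | zero => intro j hj; simp [cwWord, swapM_one]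
  | succ n ih =>
    intro j hj
    have hP : 0 < 2 ^ n := Nat.pow_pos (by norm_num)
    have h2 : (2:ℕ) ^ (n+1) = 2 * 2 ^ n := by ring
    have hk2 : (2 ^ (n+1) - 1 - j) / 2 = 2 ^ n - 1 - j / 2 := by omega
    have hkm : (2 ^ (n+1) - 1 - j) % 2 = 1 - j % 2 := by omega
    have hj2 : j / 2 < 2 ^ n := by omega
    rw [cwWord, cwWord, swapM_mul, hk2, hkm, ih _ hj2]
    congr 1
    rcases Nat.mod_two_eq_zero_or_one j with h | h <;>
      simp [h, swapM_L, swapM_R]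

lemma cwWord_diag (u v : ℕ) : ∀ n j,
    1 ≤ cwWord u v n j 0 0 ∧ 1 ≤ cwWord u v n j 1 1 := by
  intro n
  induction n with
  | zero => intro j; simp [cwWord]
  | succ n ih =>
    intro j
    obtain ⟨h0, h1⟩ := ih (j / 2)
    rcases Nat.mod_two_eq_zero_or_one j with h | h <;>
      · rw [cwWord]
        simp [h, Lmat, Rmat, Matrix.mul_apply, Fin.sum_univ_two]
        constructor <;> first
          | assumption
          | exact le_trans h0 (Nat.le_add_right _ _)
          | exact le_trans h1 (Nat.le_add_left _ _)
          | exact le_trans h0 (Nat.le_add_left _ _)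
          | exact le_trans h1 (Nat.le_add_right _ _)

lemma key (M : Matrix (Fin 2) (Fin 2) ℕ) (h0 : 1 ≤ M 0 0) (h1 : 1 ≤ M 1 1)
    (z : ℚ) (hz : 0 < z) : lft M z * lft (swapM M) z⁻¹ = 1 := by
  have ha : (1:ℚ) ≤ (M 0 0 : ℚ) := by exact_mod_cast h0
  have hd : (1:ℚ) ≤ (M 1 1 : ℚ) := by exact_mod_cast h1
  have hb : (0:ℚ) ≤ (M 0 1 : ℚ) := by positivity
  have hc : (0:ℚ) ≤ (M 1 0 : ℚ) := by positivity
  have hz' : z ≠ 0 := ne_of_gt hz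
  have hden1 : (M 1 0 : ℚ) * z + (M 1 1 : ℚ) ≠ 0 := by
    have : (0:ℚ) < (M 1 0 : ℚ) * z + (M 1 1 : ℚ) := by nlinarith
    exact ne_of_gt this
  have hzinv : 0 < z⁻¹ := inv_pos.mpr hz
  have hden2 : (M 0 1 : ℚ) * z⁻¹ + (M 0 0 : ℚ) ≠ 0 := by
    have : (0:ℚ) < (M 0 1 : ℚ) * z⁻¹ + (M 0 0 : ℚ) := by nlinarith
    exact ne_of_gt this
  unfold lft swapM
  simp only [Matrix.cons_val', Matrix.cons_val_zero, Matrix.cons_val_one,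
    Matrix.head_cons, Matrix.empty_val', Matrix.cons_val_fin_one, Matrix.head_fin_const,
    Matrix.of_apply]
  field_simp
  ring

theorem nathanson_symmetry (u v : ℕ) (hu : 0 < u) (hv : 0 < v)
    (z : ℚ) (hz : 0 < z) (n i : ℕ) (h1 : 1 ≤ i) (h2 : i ≤ 2 ^ n) :
    cw u v z n i * cw v u z⁻¹ n (2 ^ n + 1 - i) = 1 := by
  have hj : i - 1 < 2 ^ n := by omega
  have heq : 2 ^ n + 1 - i - 1 = 2 ^ n - 1 - (i - 1) := by omega
  unfold cw
  rw [heq, cwWord_flip u v n (i-1) hj]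
  obtain ⟨ha, hb⟩ := cwWord_diag u v n (i-1)
  exact key _ ha hb z hz
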